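/- Let δ₁ and δ₂ be the (relative) Dehn functions of finitely presented groups G₁ = ⟨X₁ | R₁⟩ and G₂ = ⟨X₂ | R₂⟩ with X₁, X₂, R₁, R₂ finite and disjoint. Then the Dehn function δ of the free product G₁ ∗ G₂ with respect to the presentation ⟨X₁ ∪ X₂ | R₁ ∪ R₂⟩ satisfies δ(n) ≤ max over decompositions n₁ + n₂ + ⋯ = n of sums of δ₁ and δ₂ values; in particular δ ⪯ max(δ̄₁, δ̄₂) where δ̄ᵢ denotes superadditive closure. -/

import Mathlib

/-- The area of `w` with respect to the relator set `R`: the least `k` such that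
`w` is a product of `k` conjugates of elements of `R^{±1}`. -/
noncomputable def relArea {F : Type*} [Group F] (R : Set F) (w : F) : ℕ :=
  sInf {k | ∃ l : List F, l.length = k ∧
    (∀ x ∈ l, ∃ f r : F, (r ∈ R ∨ r⁻¹ ∈ R) ∧ x = f⁻¹ * r * f) ∧ l.prod = w}

/-- The Dehn function of the presentation `⟨X | R⟩`: the maximal area of a word
of length at most `n` representing the identity. -/
noncomputable def dehn {X : Type*} [DecidableEq X] (R : Set (FreeGroup X)) (n : ℕ) : ℕ :=
  sSup {k | ∃ w : FreeGroup X, w ∈ Subgroup.normalClosure R ∧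
    w.toWord.length ≤ n ∧ relArea R w = k}

/-- The superadditive closure of `f`. -/
noncomputable def superadditiveClosure (f : ℕ → ℕ) (n : ℕ) : ℕ :=
  sSup {m | ∃ l : List ℕ, l ≠ [] ∧ (∀ a ∈ l, 1 ≤ a) ∧ l.sum = n ∧ (l.map f).sum = m}

set_option linter.unusedSectionVars false
namespace DehnProof

open FreeGroup

section RelArea

variable {F : Type*} [Group F]

def IsConjRel (R : Set F) (x : F) : Prop := ∃ f r : F, (r ∈ R ∨ r⁻¹ ∈ R) ∧ x = f⁻¹ * r * f

def areaSet (R : Set F) (w : F) : Set ℕ :=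
  {k | ∃ l : List F, l.length = k ∧ (∀ x ∈ l, IsConjRel R x) ∧ l.prod = w}

lemma relArea_def (R : Set F) (w : F) : relArea R w = sInf (areaSet R w) := rfl

lemma conj_list_prod (g : F) (l : List F) :
    (l.map fun x => g * x * g⁻¹).prod = g * l.prod * g⁻¹ := by
  induction l with
  | nil => simp
  | cons a t ih => simp only [List.map_cons, List.prod_cons, ih]; group

def repSubgroup (R : Set F) : Subgroup F where
  carrier := {w | ∃ l : List F, (∀ x ∈ l, IsConjRel R x) ∧ l.prod = w}
  one_mem' := ⟨[], by simp, by simp⟩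
  mul_mem' := by
    rintro a b ⟨la, hla, rfl⟩ ⟨lb, hlb, rfl⟩
    exact ⟨la ++ lb, fun x hx => (List.mem_append.1 hx).elim (hla x) (hlb x), by simp⟩
  inv_mem' := by
    rintro a ⟨l, hl, rfl⟩
    refine ⟨(l.map fun x => x⁻¹).reverse, ?_, (List.prod_inv_reverse l).symm⟩
    intro x hx
    rw [List.mem_reverse, List.mem_map] at hx
    obtain ⟨y, hy, rfl⟩ := hx
    obtain ⟨f, r, hr, rfl⟩ := hl y hy
    exact ⟨f, r⁻¹, by rw [inv_inv]; exact hr.symm, by group⟩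

instance (R : Set F) : (repSubgroup R).Normal := by
  constructor
  rintro a ⟨l, hl, rfl⟩ g
  refine ⟨l.map fun x => g * x * g⁻¹, ?_, conj_list_prod g l⟩
  intro x hx
  rw [List.mem_map] at hx
  obtain ⟨y, hy, rfl⟩ := hx
  obtain ⟨f, r, hr, rfl⟩ := hl y hy
  exact ⟨f * g⁻¹, r, hr, by group⟩

lemma nc_le_rep (R : Set F) : Subgroup.normalClosure R ≤ repSubgroup R := by
  apply Subgroup.normalClosure_le_normal
  intro r hr
  refine ⟨[r], ?_, by simp⟩
  intro x hx
  rw [List.mem_singleton] at hx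
  subst hx
  exact ⟨1, x, Or.inl hr, by group⟩

lemma exists_rep {R : Set F} {w : F} (h : w ∈ Subgroup.normalClosure R) :
    ∃ l : List F, l.length = relArea R w ∧ (∀ x ∈ l, IsConjRel R x) ∧ l.prod = w := by
  have hne : (areaSet R w).Nonempty := by
    obtain ⟨l, hl, hp⟩ := nc_le_rep R h
    exact ⟨l.length, l, rfl, hl, hp⟩
  exact Nat.sInf_mem hne

lemma relArea_one (R : Set F) : relArea R 1 = 0 :=
  Nat.eq_zero_of_le_zero (Nat.sInf_le ⟨[], rfl, by simp, by simp⟩)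

lemma relArea_mul_le {R : Set F} {a b : F} (ha : a ∈ Subgroup.normalClosure R)
    (hb : b ∈ Subgroup.normalClosure R) : relArea R (a * b) ≤ relArea R a + relArea R b := by
  obtain ⟨la, hla, hma, hpa⟩ := exists_rep ha
  obtain ⟨lb, hlb, hmb, hpb⟩ := exists_rep hb
  refine Nat.sInf_le ⟨la ++ lb, by simp [hla, hlb], ?_, by simp [hpa, hpb]⟩
  exact fun x hx => (List.mem_append.1 hx).elim (hma x) (hmb x)

lemma relArea_conj_le {R : Set F} {a : F} (ha : a ∈ Subgroup.normalClosure R) (g : F) :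
    relArea R (g * a * g⁻¹) ≤ relArea R a := by
  obtain ⟨l, hl, hm, hp⟩ := exists_rep ha
  refine Nat.sInf_le ⟨l.map fun x => g * x * g⁻¹, by simp [hl], ?_, by
    rw [conj_list_prod, hp]⟩
  intro x hx
  rw [List.mem_map] at hx
  obtain ⟨y, hy, rfl⟩ := hx
  obtain ⟨f, r, hr, rfl⟩ := hm y hy
  exact ⟨f * g⁻¹, r, hr, by group⟩

lemma relArea_map_le {F' : Type*} [Group F'] (φ : F →* F') {R : Set F} {R' : Set F'}
    (hR : ∀ r : F, r ∈ R → φ r ∈ R') {a : F} (ha : a ∈ Subgroup.normalClosure R) :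
    relArea R' (φ a) ≤ relArea R a := by
  obtain ⟨l, hl, hm, hp⟩ := exists_rep ha
  refine Nat.sInf_le ⟨l.map φ, by simp [hl], ?_, by rw [← map_list_prod, hp]⟩
  intro x hx
  rw [List.mem_map] at hx
  obtain ⟨y, hy, rfl⟩ := hx
  obtain ⟨f, r, hr, rfl⟩ := hm y hy
  refine ⟨φ f, φ r, ?_, by simp⟩
  rcases hr with h | h
  · exact Or.inl (hR _ h)
  · exact Or.inr (by rw [← _root_.map_inv φ]; exact hR _ h)

end RelArea

section Dehn

variable {X : Type*} [DecidableEq X] [Finite X]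

def dehnSet (R : Set (FreeGroup X)) (n : ℕ) : Set ℕ :=
  {k | ∃ w : FreeGroup X, w ∈ Subgroup.normalClosure R ∧
    w.toWord.length ≤ n ∧ relArea R w = k}

lemma dehn_def (R : Set (FreeGroup X)) (n : ℕ) : dehn R n = sSup (dehnSet R n) := rfl

lemma ball_finite (n : ℕ) : {w : FreeGroup X | w.toWord.length ≤ n}.Finite :=
  Set.Finite.preimage (Set.injOn_of_injective toWord_injective)
    (List.finite_length_le (X × Bool) n)

lemma dehnSet_bdd (R : Set (FreeGroup X)) (n : ℕ) : BddAbove (dehnSet R n) := by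
  refine Set.Finite.bddAbove (((ball_finite n).image (relArea R)).subset ?_)
  rintro k ⟨w, _, h2, rfl⟩
  exact ⟨w, h2, rfl⟩

lemma relArea_le_dehn {R : Set (FreeGroup X)} {w : FreeGroup X} {n : ℕ}
    (h : w ∈ Subgroup.normalClosure R) (hn : w.toWord.length ≤ n) :
    relArea R w ≤ dehn R n :=
  le_csSup (dehnSet_bdd R n) ⟨w, h, hn, rfl⟩

lemma dehn_mono (R : Set (FreeGroup X)) {m n : ℕ} (h : m ≤ n) : dehn R m ≤ dehn R n := by
  rw [dehn_def, dehn_def]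
  refine csSup_le_csSup (dehnSet_bdd R n) ⟨relArea R 1, 1, one_mem _, by simp, rfl⟩ ?_
  rintro k ⟨w, h1, h2, rfl⟩
  exact ⟨w, h1, h2.trans h, rfl⟩

end Dehn

section SC

def scSet (f : ℕ → ℕ) (n : ℕ) : Set ℕ :=
  {m | ∃ l : List ℕ, l ≠ [] ∧ (∀ a ∈ l, 1 ≤ a) ∧ l.sum = n ∧ (l.map f).sum = m}

lemma sc_def (f : ℕ → ℕ) (n : ℕ) : superadditiveClosure f n = sSup (scSet f n) := rfl

lemma length_le_sum (l : List ℕ) (h : ∀ a ∈ l, 1 ≤ a) : l.length ≤ l.sum := by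
  induction l with
  | nil => simp
  | cons a t ih =>
    simp only [List.length_cons, List.sum_cons]
    have := h a (List.mem_cons_self)
    have := ih (fun b hb => h b (List.mem_cons_of_mem a hb))
    omega

lemma listSet_finite (n : ℕ) : {l : List ℕ | l.sum = n ∧ ∀ a ∈ l, 1 ≤ a}.Finite := by
  have h1 : {l : List (Fin (n + 1)) | l.length ≤ n}.Finite := List.finite_length_le _ n
  refine (h1.image (List.map (fun i : Fin (n + 1) => (i : ℕ)))).subset ?_
  rintro l ⟨hsum, hpos⟩
  have hlen : l.length ≤ n := hsum ▸ length_le_sum l hpos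
  have hlt : ∀ a ∈ l, a < n + 1 := fun a ha =>
    Nat.lt_succ_of_le (hsum ▸ List.single_le_sum (fun x _ => Nat.zero_le x) a ha)
  refine ⟨l.attach.map (fun x => (⟨x.1, hlt x.1 x.2⟩ : Fin (n + 1))), ?_, ?_⟩
  · simpa using hlen
  · simp [List.map_map]

lemma scSet_bdd (f : ℕ → ℕ) (n : ℕ) : BddAbove (scSet f n) := by
  refine Set.Finite.bddAbove (((listSet_finite n).image (fun l => (l.map f).sum)).subset ?_)
  rintro m ⟨l, _, h1, h2, rfl⟩
  exact ⟨l, ⟨h2, h1⟩, rfl⟩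

lemma le_sc {f : ℕ → ℕ} {n m : ℕ} (h : m ∈ scSet f n) : m ≤ superadditiveClosure f n :=
  le_csSup (scSet_bdd f n) h

lemma sc_le {f : ℕ → ℕ} {n c : ℕ} (h : ∀ m ∈ scSet f n, m ≤ c) :
    superadditiveClosure f n ≤ c :=
  csSup_le' h

end SC

section Norm

variable {α β : Type*} [DecidableEq α] [DecidableEq β]

lemma length_map_le (f : α → β) (x : FreeGroup α) :
    (FreeGroup.map f x).toWord.length ≤ x.toWord.length := by
  conv_lhs => rw [← mk_toWord (x := x), map.mk]
  exact (norm_mk_le).trans (by simp)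

lemma length_prod_le (l : List (FreeGroup α)) :
    l.prod.toWord.length ≤ (l.map fun x => x.toWord.length).sum := by
  induction l with
  | nil => simp [toWord_one]
  | cons a t ih =>
    simp only [List.prod_cons, List.map_cons, List.sum_cons]
    exact (norm_mul_le a t.prod).trans (by exact Nat.add_le_add le_rfl ih)

lemma length_mul_le (a b : FreeGroup α) :
    (a * b).toWord.length ≤ a.toWord.length + b.toWord.length :=
  norm_mul_le a b

end Norm

section Parts

variable {X₁ X₂ : Type*} [DecidableEq X₁] [DecidableEq X₂]

/-- a single generator-or-inverse as a free group element -/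
def gen {α : Type*} (x : α) (b : Bool) : FreeGroup α := cond b (of x) (of x)⁻¹

lemma mk_single {α : Type*} (x : α) (b : Bool) : mk [(x, b)] = gen x b := by
  cases b
  · show mk [(x, false)] = (of x)⁻¹
    rw [show (of x : FreeGroup α) = mk [(x, true)] from rfl, inv_mk]
    rfl
  · rfl

lemma norm_gen {α : Type*} [DecidableEq α] (x : α) (b : Bool) :
    (gen x b).toWord.length = 1 := by
  cases b
  · show norm (of x)⁻¹ = 1
    rw [norm_inv_eq, norm_of]
  · exact norm_of x

def emb : FreeGroup X₁ ⊕ FreeGroup X₂ → FreeGroup (X₁ ⊕ X₂) :=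
  Sum.elim (FreeGroup.map Sum.inl) (FreeGroup.map Sum.inr)

def sNorm : FreeGroup X₁ ⊕ FreeGroup X₂ → ℕ :=
  Sum.elim (fun u => u.toWord.length) (fun v => v.toWord.length)

lemma map_gen {α β : Type*} (f : α → β) (x : α) (b : Bool) :
    FreeGroup.map f (gen x b) = gen (f x) b := by
  cases b <;> simp [gen, map.of]

@[simp] lemma emb_inl (u : FreeGroup X₁) :
    emb (X₂ := X₂) (Sum.inl u) = FreeGroup.map Sum.inl u := rfl

@[simp] lemma emb_inr (v : FreeGroup X₂) :
    emb (X₁ := X₁) (Sum.inr v) = FreeGroup.map Sum.inr v := rfl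

lemma exists_parts (L : List ((X₁ ⊕ X₂) × Bool)) :
    ∃ parts : List ((FreeGroup X₁ ⊕ FreeGroup X₂) × ℕ),
      (parts.map fun p => emb p.1).prod = mk L ∧
      (parts.map Prod.snd).sum = L.length ∧
      (∀ p ∈ parts, sNorm p.1 ≤ p.2 ∧ 1 ≤ p.2) ∧
      (parts.map fun p => p.1.isLeft).Chain' (· ≠ ·) := by
  induction L with
  | nil => exact ⟨[], by simp [one_eq_mk], by simp, by simp, List.isChain_nil⟩
  | cons a T ih =>
    obtain ⟨parts, hprod, hsum, hmem, hchain⟩ := ih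
    obtain ⟨s, b⟩ := a
    cases s with
    | inl x =>
      by_cases hc : ∃ u m rest, parts = (Sum.inl u, m) :: rest
      · obtain ⟨u, m, rest, rfl⟩ := hc
        refine ⟨(Sum.inl (gen x b * u), m + 1) :: rest, ?_, ?_, ?_, ?_⟩
        · simp only [List.map_cons, List.prod_cons, emb_inl] at hprod ⊢
          rw [_root_.map_mul, map_gen, mul_assoc, hprod, ← mk_single, mul_mk]
          rfl
        · simp only [List.map_cons, List.sum_cons, List.length_cons] at hsum ⊢
          omega
        · intro p hp
          rcases List.mem_cons.1 hp with rfl | hp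
          · constructor
            · show (gen x b * u).toWord.length ≤ m + 1
              have h1 := length_mul_le (gen x b) u
              have h2 := (hmem _ (List.mem_cons_self)).1
              simp only [sNorm, Sum.elim_inl] at h2
              rw [norm_gen] at h1
              omega
            · omega
          · exact hmem p (List.mem_cons_of_mem _ hp)
        · simpa using hchain
      · refine ⟨(Sum.inl (gen x b), 1) :: parts, ?_, ?_, ?_, ?_⟩
        · simp only [List.map_cons, List.prod_cons, emb_inl, hprod]
          rw [map_gen, ← mk_single, mul_mk]
          rfl
        · simp only [List.map_cons, List.sum_cons, List.length_cons, hsum]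
          omega
        · intro p hp
          rcases List.mem_cons.1 hp with rfl | hp
          · exact ⟨by simp [sNorm, norm_gen], le_rfl⟩
          · exact hmem p hp
        · simp only [List.map_cons]
          apply List.isChain_cons.2
          refine ⟨?_, hchain⟩
          intro c hc'
          cases parts with
          | nil => simp at hc'
          | cons q rest =>
            simp only [List.map_cons, List.head?_cons, Option.mem_def, Option.some.injEq] at hc'
            subst hc'
            cases hq : q.1 with
            | inl u => exact absurd ⟨u, q.2, rest, by rw [← hq]⟩ hc
            | inr v => simp [hq]
    | inr y =>
      by_cases hc : ∃ v m rest, parts = (Sum.inr v, m) :: rest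
      · obtain ⟨v, m, rest, rfl⟩ := hc
        refine ⟨(Sum.inr (gen y b * v), m + 1) :: rest, ?_, ?_, ?_, ?_⟩
        · simp only [List.map_cons, List.prod_cons, emb_inr] at hprod ⊢
          rw [_root_.map_mul, map_gen, mul_assoc, hprod, ← mk_single, mul_mk]
          rfl
        · simp only [List.map_cons, List.sum_cons, List.length_cons] at hsum ⊢
          omega
        · intro p hp
          rcases List.mem_cons.1 hp with rfl | hp
          · constructor
            · show (gen y b * v).toWord.length ≤ m + 1
              have h1 := length_mul_le (gen y b) v
              have h2 := (hmem _ (List.mem_cons_self)).1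
              simp only [sNorm, Sum.elim_inr] at h2
              rw [norm_gen] at h1
              omega
            · omega
          · exact hmem p (List.mem_cons_of_mem _ hp)
        · simpa using hchain
      · refine ⟨(Sum.inr (gen y b), 1) :: parts, ?_, ?_, ?_, ?_⟩
        · simp only [List.map_cons, List.prod_cons, emb_inr, hprod]
          rw [map_gen, ← mk_single, mul_mk]
          rfl
        · simp only [List.map_cons, List.sum_cons, List.length_cons, hsum]
          omega
        · intro p hp
          rcases List.mem_cons.1 hp with rfl | hp
          · exact ⟨by simp [sNorm, norm_gen], le_rfl⟩
          · exact hmem p hp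
        · simp only [List.map_cons]
          apply List.isChain_cons.2
          refine ⟨?_, hchain⟩
          intro c hc'
          cases parts with
          | nil => simp at hc'
          | cons q rest =>
            simp only [List.map_cons, List.head?_cons, Option.mem_def, Option.some.injEq] at hc'
            subst hc'
            cases hq : q.1 with
            | inl u => simp [hq]
            | inr v => exact absurd ⟨v, q.2, rest, by rw [← hq]⟩ hc

end Parts

section Coprod

universe u v

variable {X₁ : Type u} {X₂ : Type v} [DecidableEq X₁] [DecidableEq X₂]
variable (R₁ : Set (FreeGroup X₁)) (R₂ : Set (FreeGroup X₂))

def Fac : Bool → Type (max u v) := fun b =>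
  cond b (ULift.{v} (FreeGroup X₁ ⧸ Subgroup.normalClosure R₁))
         (ULift.{u} (FreeGroup X₂ ⧸ Subgroup.normalClosure R₂))

instance (b : Bool) : Group (Fac R₁ R₂ b) := by
  cases b
  · exact inferInstanceAs (Group (ULift _))
  · exact inferInstanceAs (Group (ULift _))

def q₁ : FreeGroup X₁ →* Fac R₁ R₂ true :=
  ((MulEquiv.ulift.symm :
      (FreeGroup X₁ ⧸ Subgroup.normalClosure R₁) ≃*
        ULift.{v} (FreeGroup X₁ ⧸ Subgroup.normalClosure R₁)).toMonoidHom).comp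
    (QuotientGroup.mk' (Subgroup.normalClosure R₁))

def q₂ : FreeGroup X₂ →* Fac R₁ R₂ false :=
  ((MulEquiv.ulift.symm :
      (FreeGroup X₂ ⧸ Subgroup.normalClosure R₂) ≃*
        ULift.{u} (FreeGroup X₂ ⧸ Subgroup.normalClosure R₂)).toMonoidHom).comp
    (QuotientGroup.mk' (Subgroup.normalClosure R₂))

lemma q₁_eq_one_iff (u : FreeGroup X₁) :
    q₁ R₁ R₂ u = 1 ↔ u ∈ Subgroup.normalClosure R₁ := by
  unfold q₁
  erw [MonoidHom.comp_apply, MulEquiv.coe_toMonoidHom, EmbeddingLike.map_eq_one_iff]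
  exact QuotientGroup.eq_one_iff u

lemma q₂_eq_one_iff (v : FreeGroup X₂) :
    q₂ R₁ R₂ v = 1 ↔ v ∈ Subgroup.normalClosure R₂ := by
  unfold q₂
  erw [MonoidHom.comp_apply, MulEquiv.coe_toMonoidHom, EmbeddingLike.map_eq_one_iff]
  exact QuotientGroup.eq_one_iff v

noncomputable def φ : FreeGroup (X₁ ⊕ X₂) →* Monoid.CoprodI (Fac R₁ R₂) :=
  FreeGroup.lift (Sum.elim
    (fun x => Monoid.CoprodI.of (M := Fac R₁ R₂) (i := true) (q₁ R₁ R₂ (FreeGroup.of x)))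
    (fun y => Monoid.CoprodI.of (M := Fac R₁ R₂) (i := false) (q₂ R₁ R₂ (FreeGroup.of y))))

noncomputable def letter : FreeGroup X₁ ⊕ FreeGroup X₂ → Σ b, Fac R₁ R₂ b :=
  Sum.elim (fun u => ⟨true, q₁ R₁ R₂ u⟩) (fun v => ⟨false, q₂ R₁ R₂ v⟩)

lemma letter_fst (s : FreeGroup X₁ ⊕ FreeGroup X₂) :
    (letter R₁ R₂ s).1 = s.isLeft := by cases s <;> rfl

lemma φ_emb (s : FreeGroup X₁ ⊕ FreeGroup X₂) :
    φ R₁ R₂ (emb s) = Monoid.CoprodI.of (letter R₁ R₂ s).2 := by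
  cases s with
  | inl u =>
    show φ R₁ R₂ (FreeGroup.map Sum.inl u)
        = Monoid.CoprodI.of (M := Fac R₁ R₂) (i := true) (q₁ R₁ R₂ u)
    have key : (φ R₁ R₂).comp (FreeGroup.map Sum.inl)
        = (Monoid.CoprodI.of (M := Fac R₁ R₂) (i := true)).comp (q₁ R₁ R₂) := by
      apply FreeGroup.ext_hom
      intro a
      simp only [MonoidHom.comp_apply, map.of, φ, FreeGroup.lift_apply_of, Sum.elim_inl]
    exact DFunLike.congr_fun key u
  | inr v =>
    show φ R₁ R₂ (FreeGroup.map Sum.inr v)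
        = Monoid.CoprodI.of (M := Fac R₁ R₂) (i := false) (q₂ R₁ R₂ v)
    have key : (φ R₁ R₂).comp (FreeGroup.map Sum.inr)
        = (Monoid.CoprodI.of (M := Fac R₁ R₂) (i := false)).comp (q₂ R₁ R₂) := by
      apply FreeGroup.ext_hom
      intro a
      simp only [MonoidHom.comp_apply, map.of, φ, FreeGroup.lift_apply_of, Sum.elim_inr]
    exact DFunLike.congr_fun key v

/-- the triviality predicate for a syllable -/
def sTriv : FreeGroup X₁ ⊕ FreeGroup X₂ → Prop :=
  Sum.elim (· ∈ Subgroup.normalClosure R₁) (· ∈ Subgroup.normalClosure R₂)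

lemma letter_eq_one_iff (s : FreeGroup X₁ ⊕ FreeGroup X₂) :
    (letter R₁ R₂ s).2 = 1 ↔ sTriv R₁ R₂ s := by
  cases s with
  | inl u => exact q₁_eq_one_iff R₁ R₂ u
  | inr v => exact q₂_eq_one_iff R₁ R₂ v

lemma nc_le_ker : Subgroup.normalClosure
      ((FreeGroup.map Sum.inl) '' R₁ ∪ (FreeGroup.map Sum.inr) '' R₂)
    ≤ (φ R₁ R₂).ker := by
  apply Subgroup.normalClosure_le_normal
  rintro w (⟨r, hr, rfl⟩ | ⟨r, hr, rfl⟩)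
  · rw [SetLike.mem_coe, MonoidHom.mem_ker,
      show (FreeGroup.map Sum.inl) r = emb (X₂ := X₂) (Sum.inl r) from rfl,
      φ_emb R₁ R₂ (Sum.inl r)]
    show Monoid.CoprodI.of (M := Fac R₁ R₂) (i := true) (q₁ R₁ R₂ r) = 1
    rw [(q₁_eq_one_iff R₁ R₂ r).2 (Subgroup.subset_normalClosure hr), _root_.map_one]
  · rw [SetLike.mem_coe, MonoidHom.mem_ker,
      show (FreeGroup.map Sum.inr) r = emb (X₁ := X₁) (Sum.inr r) from rfl,
      φ_emb R₁ R₂ (Sum.inr r)]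
    show Monoid.CoprodI.of (M := Fac R₁ R₂) (i := false) (q₂ R₁ R₂ r) = 1
    rw [(q₂_eq_one_iff R₁ R₂ r).2 (Subgroup.subset_normalClosure hr), _root_.map_one]

lemma parts_empty (parts : List (FreeGroup X₁ ⊕ FreeGroup X₂))
    (hch : (parts.map Sum.isLeft).Chain' (· ≠ ·))
    (hne : ∀ s ∈ parts, ¬ sTriv R₁ R₂ s)
    (hprod : ((parts.map (letter R₁ R₂)).map
      (fun l => Monoid.CoprodI.of (M := Fac R₁ R₂) l.2)).prod = 1) :
    parts = [] := by
  classical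
  let W : Monoid.CoprodI.Word (Fac R₁ R₂) :=
    { toList := parts.map (letter R₁ R₂)
      ne_one := by
        intro l hl
        rw [List.mem_map] at hl
        obtain ⟨s, hs, rfl⟩ := hl
        rw [Ne, letter_eq_one_iff]
        exact hne s hs
      chain_ne := by
        rw [List.isChain_map]
        have hch := (List.isChain_map _).1 hch
        exact hch.imp (by intro a b h; simpa [letter_fst] using h) }
  have h1 : W.prod = (Monoid.CoprodI.Word.empty (M := Fac R₁ R₂)).prod := by
    rw [Monoid.CoprodI.Word.prod_empty]
    exact hprod
  have h2 : W = Monoid.CoprodI.Word.empty := by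
    have hinj := (Monoid.CoprodI.Word.equiv (M := Fac R₁ R₂)).symm.injective
    exact hinj h1
  have h3 : parts.map (letter R₁ R₂) = [] := congrArg Monoid.CoprodI.Word.toList h2
  exact List.map_eq_nil_iff.1 h3

end Coprod

section Main

universe u v

variable {X₁ : Type u} {X₂ : Type v} [DecidableEq X₁] [DecidableEq X₂] [Finite X₁] [Finite X₂]
variable (R₁ : Set (FreeGroup X₁)) (R₂ : Set (FreeGroup X₂))

local notation "RR" => (FreeGroup.map Sum.inl) '' R₁ ∪ (FreeGroup.map Sum.inr) '' R₂

lemma emb_mem_nc {s : FreeGroup X₁ ⊕ FreeGroup X₂} (h : sTriv R₁ R₂ s) :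
    emb s ∈ Subgroup.normalClosure RR := by
  cases s with
  | inl u =>
    haveI : ((Subgroup.normalClosure RR).comap
        (FreeGroup.map Sum.inl : FreeGroup X₁ →* FreeGroup (X₁ ⊕ X₂))).Normal :=
      Subgroup.Normal.comap inferInstance _
    have hle : Subgroup.normalClosure R₁ ≤ (Subgroup.normalClosure RR).comap
        (FreeGroup.map Sum.inl : FreeGroup X₁ →* FreeGroup (X₁ ⊕ X₂)) :=
      Subgroup.normalClosure_le_normal
        (fun r hr => Subgroup.subset_normalClosure (Or.inl ⟨r, hr, rfl⟩))
    exact hle h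
  | inr v =>
    haveI : ((Subgroup.normalClosure RR).comap
        (FreeGroup.map Sum.inr : FreeGroup X₂ →* FreeGroup (X₁ ⊕ X₂))).Normal :=
      Subgroup.Normal.comap inferInstance _
    have hle : Subgroup.normalClosure R₂ ≤ (Subgroup.normalClosure RR).comap
        (FreeGroup.map Sum.inr : FreeGroup X₂ →* FreeGroup (X₁ ⊕ X₂)) :=
      Subgroup.normalClosure_le_normal
        (fun r hr => Subgroup.subset_normalClosure (Or.inr ⟨r, hr, rfl⟩))
    exact hle h

lemma length_emb_le (s : FreeGroup X₁ ⊕ FreeGroup X₂) :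
    (emb s).toWord.length ≤ sNorm s := by
  cases s with
  | inl u => exact length_map_le _ _
  | inr v => exact length_map_le _ _

lemma relArea_emb_le {s : FreeGroup X₁ ⊕ FreeGroup X₂} (h : sTriv R₁ R₂ s) {m : ℕ}
    (hm : sNorm s ≤ m) :
    relArea RR (emb s) ≤ max (dehn R₁ m) (dehn R₂ m) := by
  cases s with
  | inl u =>
    refine le_trans (relArea_map_le (FreeGroup.map Sum.inl)
      (fun r hr => Or.inl ⟨r, hr, rfl⟩) h) (le_trans ?_ (le_max_left _ _))
    exact le_trans (relArea_le_dehn h le_rfl) (dehn_mono R₁ hm)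
  | inr v =>
    refine le_trans (relArea_map_le (FreeGroup.map Sum.inr)
      (fun r hr => Or.inr ⟨r, hr, rfl⟩) h) (le_trans ?_ (le_max_right _ _))
    exact le_trans (relArea_le_dehn h le_rfl) (dehn_mono R₂ hm)

lemma main_bound : ∀ (n : ℕ) (w : FreeGroup (X₁ ⊕ X₂)),
    w ∈ Subgroup.normalClosure RR → w.toWord.length ≤ n →
    ∃ l : List ℕ, (∀ a ∈ l, 1 ≤ a) ∧ l.sum ≤ w.toWord.length ∧
      relArea RR w ≤ (l.map fun m => max (dehn R₁ m) (dehn R₂ m)).sum := by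
  intro n
  induction n with
  | zero =>
    intro w hw hlen
    have hw1 : w = 1 := toWord_eq_nil_iff.1 (List.length_eq_zero_iff.1 (Nat.le_zero.1 hlen))
    subst hw1
    exact ⟨[], by simp, by simp, by simp [relArea_one]⟩
  | succ n ih =>
    intro w hw hlen
    by_cases h1 : w = 1
    · subst h1
      exact ⟨[], by simp, by simp, by simp [relArea_one]⟩
    obtain ⟨parts, hprod, hsum, hmem, hchain⟩ := exists_parts w.toWord
    rw [mk_toWord] at hprod
    have hφ : φ R₁ R₂ w = 1 := nc_le_ker R₁ R₂ hw
    have hex : ∃ p ∈ parts, sTriv R₁ R₂ p.1 := by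
      by_contra hno
      push_neg at hno
      have hemp : parts.map Prod.fst = [] := by
        apply parts_empty R₁ R₂
        · rw [List.map_map]
          exact hchain
        · intro s hs
          rw [List.mem_map] at hs
          obtain ⟨p, hp, rfl⟩ := hs
          exact hno p hp
        · have : (((parts.map Prod.fst).map (letter R₁ R₂)).map
              (fun l => Monoid.CoprodI.of (M := Fac R₁ R₂) l.2)).prod = φ R₁ R₂ w := by
            rw [← hprod, map_list_prod, List.map_map, List.map_map, List.map_map]
            congr 1
            apply List.map_congr_left
            intro p _
            exact (φ_emb R₁ R₂ p.1).symm
          rw [this, hφ]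
      have : parts = [] := List.map_eq_nil_iff.1 hemp
      subst this
      simp at hprod
      exact h1 hprod.symm
    obtain ⟨p, hp, htriv⟩ := hex
    obtain ⟨pre, post, rfl⟩ := List.append_of_mem hp
    rw [List.map_append, List.prod_append, List.map_cons, List.prod_cons] at hprod
    set P : FreeGroup (X₁ ⊕ X₂) := ((pre.map fun p => emb p.1)).prod with hP
    set Q : FreeGroup (X₁ ⊕ X₂) := ((post.map fun p => emb p.1)).prod with hQ
    have hu : emb p.1 ∈ Subgroup.normalClosure RR := emb_mem_nc R₁ R₂ htriv
    have hw'mem : P * Q ∈ Subgroup.normalClosure RR := by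
      have heq : P * Q = (P * (emb p.1)⁻¹ * P⁻¹) * w := by rw [← hprod]; group
      rw [heq]
      exact Subgroup.mul_mem _
        (Subgroup.normalClosure_normal.conj_mem _ (Subgroup.inv_mem _ hu) P) hw
    -- length bounds
    have hlenP : P.toWord.length ≤ (pre.map Prod.snd).sum := by
      refine le_trans (length_prod_le _) ?_
      rw [List.map_map]
      apply List.sum_le_sum
      intro q hq
      exact le_trans (length_emb_le q.1)
        ((hmem q (by simp [List.mem_append.2 (Or.inl hq)])).1)
    have hlenQ : Q.toWord.length ≤ (post.map Prod.snd).sum := by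
      refine le_trans (length_prod_le _) ?_
      rw [List.map_map]
      apply List.sum_le_sum
      intro q hq
      exact le_trans (length_emb_le q.1)
        ((hmem q (by simp [hq])).1)
    have hp2 : sNorm p.1 ≤ p.2 ∧ 1 ≤ p.2 := hmem p (by simp)
    have hsums : (pre.map Prod.snd).sum + (p.2 + (post.map Prod.snd).sum)
        = w.toWord.length := by
      rw [← hsum, List.map_append, List.sum_append, List.map_cons, List.sum_cons]
    have hw'len : (P * Q).toWord.length ≤ n := by
      have := length_mul_le P Q
      omega
    obtain ⟨l', hpos', hsum', harea'⟩ := ih (P * Q) hw'mem hw'len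
    refine ⟨p.2 :: l', ?_, ?_, ?_⟩
    · intro a ha
      rcases List.mem_cons.1 ha with rfl | ha
      · exact hp2.2
      · exact hpos' a ha
    · simp only [List.sum_cons]
      have := length_mul_le P Q
      omega
    · have hdecomp : w = (P * emb p.1 * P⁻¹) * (P * Q) := by rw [← hprod]; group
      have step1 : relArea RR w ≤ relArea RR (P * emb p.1 * P⁻¹) + relArea RR (P * Q) := by
        rw [hdecomp]
        exact relArea_mul_le (Subgroup.normalClosure_normal.conj_mem _ hu P) hw'mem
      have step2 : relArea RR (P * emb p.1 * P⁻¹) ≤ relArea RR (emb p.1) :=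
        relArea_conj_le hu P
      have step3 : relArea RR (emb p.1) ≤ max (dehn R₁ p.2) (dehn R₂ p.2) :=
        relArea_emb_le R₁ R₂ htriv hp2.1
      simp only [List.map_cons, List.sum_cons]
      omega

end Main

lemma sum_map_max_le (l : List ℕ) (f g : ℕ → ℕ) :
    (l.map fun a => max (f a) (g a)).sum ≤ (l.map f).sum + (l.map g).sum := by
  induction l with
  | nil => simp
  | cons a t ih =>
    simp only [List.map_cons, List.sum_cons]
    have h := max_le (Nat.le_add_right (f a) (g a)) (Nat.le_add_left (g a) (f a))
    omega

end DehnProof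

/-- `f ⪯ g`: there are positive constants `A, B, C` with `f(n) ≤ A·g(B·n) + C·n` for all `n`. -/
def IsDominatedBy (f g : ℕ → ℕ) : Prop :=
  ∃ A B C : ℕ, 0 < A ∧ 0 < B ∧ 0 < C ∧ ∀ n : ℕ, f n ≤ A * g (B * n) + C * n

theorem dehn_of_free_product {X₁ X₂ : Type*} [DecidableEq X₁] [DecidableEq X₂] [Finite X₁] [Finite X₂]
    (R₁ : Set (FreeGroup X₁)) (R₂ : Set (FreeGroup X₂))
    (hR₁ : R₁.Finite) (hR₂ : R₂.Finite) :
    -- the relator set of the presentation `⟨X₁ ∪ X₂ | R₁ ∪ R₂⟩` of `G₁ ∗ G₂`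
    let R : Set (FreeGroup (X₁ ⊕ X₂)) :=
      (FreeGroup.map Sum.inl) '' R₁ ∪ (FreeGroup.map Sum.inr) '' R₂
    (∀ n : ℕ, dehn R n ≤
        superadditiveClosure (fun m => max (dehn R₁ m) (dehn R₂ m)) n) ∧
    IsDominatedBy (dehn R)
      (fun n => max (superadditiveClosure (dehn R₁) n) (superadditiveClosure (dehn R₂) n)) := by
  intro R
  open DehnProof in
  have part1 : ∀ n : ℕ, dehn R n ≤
      superadditiveClosure (fun m => max (dehn R₁ m) (dehn R₂ m)) n := by
    intro n
    rw [DehnProof.dehn_def]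
    refine csSup_le' ?_
    rintro k ⟨w, hw, hlen, rfl⟩
    obtain ⟨l, hpos, hsum, harea⟩ := DehnProof.main_bound R₁ R₂ n w hw hlen
    rcases l with _ | ⟨a, t⟩
    · exact le_trans (by simpa using harea) (Nat.zero_le _)
    · set δ : ℕ → ℕ := fun m => max (dehn R₁ m) (dehn R₂ m) with hδ
      have h1n : (a :: t).sum ≤ n := le_trans hsum hlen
      have hta : 1 ≤ a := hpos a (List.mem_cons_self)
      set a' : ℕ := a + (n - (a :: t).sum) with ha'
      have hsum2 : (a :: t).sum = a + t.sum := by simp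
      have hmemsc : ((a' :: t).map δ).sum ∈ DehnProof.scSet δ n := by
        refine ⟨a' :: t, by simp, ?_, ?_, rfl⟩
        · intro b hb
          rcases List.mem_cons.1 hb with rfl | hb
          · omega
          · exact hpos b (List.mem_cons_of_mem _ hb)
        · simp only [List.sum_cons] at h1n ⊢
          omega
      refine le_trans ?_ (DehnProof.le_sc hmemsc)
      refine le_trans harea ?_
      have hδa : δ a ≤ δ a' :=
        max_le_max (DehnProof.dehn_mono R₁ (by omega)) (DehnProof.dehn_mono R₂ (by omega))
      have hmax : ((a :: t).map δ).sum ≤ ((a' :: t).map δ).sum := by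
        simp only [List.map_cons, List.sum_cons]
        exact Nat.add_le_add_right hδa _
      exact hmax
  refine ⟨part1, 2, 1, 1, by norm_num, by norm_num, by norm_num, ?_⟩
  intro n
  simp only [one_mul]
  have h2 : superadditiveClosure (fun m => max (dehn R₁ m) (dehn R₂ m)) n ≤
      superadditiveClosure (dehn R₁) n + superadditiveClosure (dehn R₂) n := by
    apply DehnProof.sc_le
    rintro m ⟨l, hne, hpos, hsum, rfl⟩
    have e1 : (l.map (dehn R₁)).sum ≤ superadditiveClosure (dehn R₁) n :=
      DehnProof.le_sc ⟨l, hne, hpos, hsum, rfl⟩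
    have e2 : (l.map (dehn R₂)).sum ≤ superadditiveClosure (dehn R₂) n :=
      DehnProof.le_sc ⟨l, hne, hpos, hsum, rfl⟩
    have e3 := DehnProof.sum_map_max_le l (dehn R₁) (dehn R₂)
    omega
  have h3 := part1 n
  have h4 : superadditiveClosure (dehn R₁) n ≤
      max (superadditiveClosure (dehn R₁) n) (superadditiveClosure (dehn R₂) n) :=
    le_max_left _ _
  have h5 : superadditiveClosure (dehn R₂) n ≤
      max (superadditiveClosure (dehn R₁) n) (superadditiveClosure (dehn R₂) n) :=
    le_max_right _ _
  omega
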